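/- Let 𝒮 and 𝒜 be measurable spaces, 𝒯 a Markov transition kernel from 𝒮 × 𝒜 to 𝒮, π a measurable policy, c : 𝒮 × 𝒜 → ℝ a bounded measurable cost, and μ_π an invariant probability measure for the induced kernel P^π. Let V be a bounded measurable solution of the Poisson equation V − P^π V = C_π, and set Q(s,a) = c(s,a) + ∫_𝒮 V(s') 𝒯(s, a, ds'). Let s ↦ δπ(s) be a measurable family of finite signed measures on 𝒜 with δπ(s)(𝒜) = 0 and uniformly bounded total variation, define δC(s) = ∫_𝒜 c(s,a) d δπ(s)(a) and the signed kernel δP(s, B) = ∫_𝒜 𝒯(s, a, B) d δπ(s)(a), and let ν be a finite signed measure satisfying ν = ν P^π + μ_π δP, where (μ_π δP)(B) = ∫_𝒮 δP(s, B) dμ_π(s). Then ∫_𝒮 δC dμ_π + ∫_𝒮 C_π dν = ∫_𝒮 (∫_𝒜 Q(s,a) d δπ(s)(a)) dμ_π(s). -/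

import Mathlib

open MeasureTheory ENNReal NNReal ProbabilityTheory

section Aux
variable {α β : Type*} [MeasurableSpace α] [MeasurableSpace β]

lemma aux_measurable_bind (κ : α → Measure β) (hκ : Measurable κ)
    (Cκ : ℝ≥0∞) (hCκ : Cκ ≠ ⊤) (hκb : ∀ a, κ a Set.univ ≤ Cκ)
    (T' : α → β → Measure α) (hT' : Measurable fun p : α × β => T' p.1 p.2) :
    Measurable fun a => (κ a).bind (T' a) := by
  apply Measure.measurable_of_measurable_coe
  intro B hB
  have h1 : ∀ a, ((κ a).bind (T' a)) B = ∫⁻ b, T' a b B ∂(κ a) := fun a =>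
    Measure.bind_apply hB (hT'.comp measurable_prodMk_left).aemeasurable
  simp_rw [h1]
  haveI : IsFiniteKernel (⟨κ, hκ⟩ : Kernel α β) := ⟨⟨Cκ, hCκ.lt_top, hκb⟩⟩
  exact Measurable.lintegral_kernel_prod_right (κ := ⟨κ, hκ⟩)
    ((Measure.measurable_coe hB).comp hT')

lemma aux_sm_integral (κ : α → Measure β) (hκ : Measurable κ)
    (Cκ : ℝ≥0∞) (hCκ : Cκ ≠ ⊤) (hκb : ∀ a, κ a Set.univ ≤ Cκ)
    {f : α → β → ℝ} (hf : Measurable (Function.uncurry f)) :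
    StronglyMeasurable fun a => ∫ b, f a b ∂(κ a) := by
  haveI : IsFiniteKernel (⟨κ, hκ⟩ : Kernel α β) := ⟨⟨Cκ, hCκ.lt_top, hκb⟩⟩
  exact MeasureTheory.StronglyMeasurable.integral_kernel_prod_right
    (κ := ⟨κ, hκ⟩) hf.stronglyMeasurable

lemma aux_int_bdd (μ : Measure α) [IsFiniteMeasure μ] {f : α → ℝ}
    (hf : AEStronglyMeasurable f μ) (M : ℝ) (hfb : ∀ a, |f a| ≤ M) :
    Integrable f μ :=
  Integrable.mono' (integrable_const M) hf
    (Filter.Eventually.of_forall fun a => by simpa [Real.norm_eq_abs] using hfb a)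

lemma aux_integrable_param (μ : Measure α) [IsFiniteMeasure μ]
    (κ : α → Measure β) (hκ : Measurable κ)
    (Cκ : ℝ≥0∞) (hCκ : Cκ ≠ ⊤) (hκb : ∀ a, κ a Set.univ ≤ Cκ)
    {f : α → β → ℝ} (hf : Measurable (Function.uncurry f))
    (M : ℝ) (hfb : ∀ a b, |f a b| ≤ M) :
    Integrable (fun a => ∫ b, f a b ∂(κ a)) μ := by
  refine aux_int_bdd μ (aux_sm_integral κ hκ Cκ hCκ hκb hf).aestronglyMeasurable
    (|M| * Cκ.toReal) fun a => ?_
  haveI : IsFiniteMeasure (κ a) := ⟨(hκb a).trans_lt hCκ.lt_top⟩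
  calc |∫ b, f a b ∂(κ a)| ≤ |M| * ((κ a) Set.univ).toReal := by
        rw [← Real.norm_eq_abs]
        exact norm_integral_le_of_norm_le_const
          (Filter.Eventually.of_forall fun b => by
            simpa [Real.norm_eq_abs] using (hfb a b).trans (le_abs_self M))
    _ ≤ |M| * Cκ.toReal := by
        exact mul_le_mul_of_nonneg_left (ENNReal.toReal_mono hCκ (hκb a)) (abs_nonneg M)

lemma aux_integral_bind (μ : Measure α) [IsFiniteMeasure μ]
    (κ : α → Measure β) (hκ : Measurable κ)
    (Cκ : ℝ≥0∞) (hCκ : Cκ ≠ ⊤) (hκb : ∀ a, κ a Set.univ ≤ Cκ)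
    {f : β → ℝ} (hf : Measurable f) (M : ℝ) (hfb : ∀ b, |f b| ≤ M) :
    ∫ b, f b ∂(μ.bind κ) = ∫ a, ∫ b, f b ∂(κ a) ∂μ := by
  set K : Kernel α β := ⟨κ, hκ⟩ with hK
  haveI : IsFiniteKernel K := ⟨⟨Cκ, hCκ.lt_top, hκb⟩⟩
  show ∫ b, f b ∂(μ.bind K) = ∫ a, ∫ b, f b ∂(K a) ∂μ
  have hsnd : μ.bind ⇑K = (μ ⊗ₘ K).snd := by
    ext B hB
    rw [Measure.bind_apply hB K.measurable.aemeasurable, Measure.snd_apply hB,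
      Measure.compProd_apply (measurable_snd hB)]
    rfl
  have hint : Integrable (fun p : α × β => f p.2) (μ ⊗ₘ K) :=
    aux_int_bdd _ ((hf.comp measurable_snd).aestronglyMeasurable) M fun p => hfb p.2
  rw [hsnd, Measure.snd, integral_map measurable_snd.aemeasurable hf.aestronglyMeasurable,
    Measure.integral_compProd hint]

end Aux

/-- total variation of the objective in terms of the Q-function:
with `P^π(s,·) = (π s).bind (T s)`, `C_π(s) = ∫ c(s,a) dπ(s)(a)`, an invariant
probability measure `μ_π` for `P^π`, a bounded measurable `V` solving the Poisson
equation `V − P^π V = C_π`, and `Q(s,a) = c(s,a) + ∫ V(s') 𝒯(s,a,ds')`; given a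
measurable family of finite signed measures `δπ(s) = δp(s) − δm(s)` on `𝒜` with total
mass zero and uniformly bounded total variation, the induced variation of the cost
`δC(s) = ∫ c(s,a) dδπ(s)(a)`, the signed kernel `δP(s,B) = ∫ 𝒯(s,a,B) dδπ(s)(a)`, and a
finite signed measure `ν = νp − νm` satisfying `ν = ν P^π + μ_π δP`, we have
`∫ δC dμ_π + ∫ C_π dν = ∫ (∫ Q(s,a) dδπ(s)(a)) dμ_π(s)`. -/
theorem stmt_18
    {S : Type*} [MeasurableSpace S] {A : Type*} [MeasurableSpace A]
    (T : S → A → Measure S) (hT : Measurable (fun p : S × A => T p.1 p.2))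
    [∀ s a, IsProbabilityMeasure (T s a)]
    (π : S → Measure A) (hπ : Measurable π) [∀ s, IsProbabilityMeasure (π s)]
    (c : S → A → ℝ) (hc : Measurable (fun p : S × A => c p.1 p.2))
    (hcb : ∃ M, ∀ s a, |c s a| ≤ M)
    (μπ : Measure S) [IsProbabilityMeasure μπ]
    (hμπ : ∀ B : Set S, MeasurableSet B → μπ B = ∫⁻ s, ((π s).bind (T s)) B ∂μπ)
    (V : S → ℝ) (hV : Measurable V) (hVb : ∃ M, ∀ s, |V s| ≤ M)
    (hPoisson : ∀ s, V s - ∫ x, V x ∂((π s).bind (T s)) = ∫ a, c s a ∂(π s))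
    (Q : S → A → ℝ) (hQ : ∀ s a, Q s a = c s a + ∫ x, V x ∂(T s a))
    (δp δm : S → Measure A) (hδp : Measurable δp) (hδm : Measurable δm)
    (Cb : ℝ≥0) (hδpb : ∀ s, δp s Set.univ ≤ Cb) (hδmb : ∀ s, δm s Set.univ ≤ Cb)
    (hzero : ∀ s, δp s Set.univ = δm s Set.univ)
    (νp νm : Measure S) [IsFiniteMeasure νp] [IsFiniteMeasure νm]
    (hν : ∀ B : Set S, MeasurableSet B →
      νp B + (∫⁻ s, ((π s).bind (T s)) B ∂νm) + (∫⁻ s, ((δm s).bind (T s)) B ∂μπ)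
        = νm B + (∫⁻ s, ((π s).bind (T s)) B ∂νp) + (∫⁻ s, ((δp s).bind (T s)) B ∂μπ)) :
    (∫ s, ((∫ a, c s a ∂(δp s)) - (∫ a, c s a ∂(δm s))) ∂μπ)
      + ((∫ s, (∫ a, c s a ∂(π s)) ∂νp) - (∫ s, (∫ a, c s a ∂(π s)) ∂νm))
      = ∫ s, ((∫ a, Q s a ∂(δp s)) - (∫ a, Q s a ∂(δm s))) ∂μπ := by
  classical
  obtain ⟨Mc, hMc⟩ := hcb
  obtain ⟨Mv, hMv⟩ := hVb
  have hTa : ∀ s, Measurable fun a => T s a := fun s => hT.comp measurable_prodMk_left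
  -- mass of a bind
  have hmass : ∀ (ρ : S → Measure A) (s : S),
      ((ρ s).bind (T s)) Set.univ = ρ s Set.univ := by
    intro ρ s
    rw [Measure.bind_apply MeasurableSet.univ (hTa s).aemeasurable]
    simp [measure_univ, lintegral_one]
  have hπb : ∀ s, π s Set.univ ≤ (1 : ℝ≥0∞) := fun s => by simp [measure_univ]
  have hPπm : Measurable fun s => (π s).bind (T s) :=
    aux_measurable_bind π hπ 1 one_ne_top hπb T hT
  have hKpm : Measurable fun s => (δp s).bind (T s) :=
    aux_measurable_bind δp hδp Cb coe_ne_top hδpb T hT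
  have hKmm : Measurable fun s => (δm s).bind (T s) :=
    aux_measurable_bind δm hδm Cb coe_ne_top hδmb T hT
  have hPπb : ∀ s, ((π s).bind (T s)) Set.univ ≤ (1 : ℝ≥0∞) := fun s => by
    rw [hmass]; exact hπb s
  have hKpb : ∀ s, ((δp s).bind (T s)) Set.univ ≤ (Cb : ℝ≥0∞) := fun s => by
    rw [hmass]; exact hδpb s
  have hKmb : ∀ s, ((δm s).bind (T s)) Set.univ ≤ (Cb : ℝ≥0∞) := fun s => by
    rw [hmass]; exact hδmb s
  haveI hfinp : ∀ s, IsFiniteMeasure (δp s) := fun s => ⟨(hδpb s).trans_lt coe_lt_top⟩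
  haveI hfinm : ∀ s, IsFiniteMeasure (δm s) := fun s => ⟨(hδmb s).trans_lt coe_lt_top⟩
  -- step 1: pointwise expansion of ∫ Q
  have hQexp : ∀ (ρ : S → Measure A), Measurable ρ → (∀ s, ρ s Set.univ ≤ (Cb : ℝ≥0∞)) →
      ∀ s, ∫ a, Q s a ∂(ρ s)
        = (∫ a, c s a ∂(ρ s)) + ∫ x, V x ∂((ρ s).bind (T s)) := by
    intro ρ hρ hρb s
    haveI : IsFiniteMeasure (ρ s) := ⟨(hρb s).trans_lt coe_lt_top⟩
    have h1 : Integrable (fun a => c s a) (ρ s) :=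
      aux_int_bdd _ ((hc.comp measurable_prodMk_left).aestronglyMeasurable) Mc (hMc s)
    have h2 : Integrable (fun a => ∫ x, V x ∂(T s a)) (ρ s) :=
      aux_integrable_param _ (fun a => T s a) (hTa s) 1 one_ne_top
        (fun a => by simp [measure_univ]) (f := fun a x => V x)
        (hV.comp measurable_snd) Mv (fun a x => hMv x)
    have h3 : ∫ x, V x ∂((ρ s).bind (T s)) = ∫ a, ∫ x, V x ∂(T s a) ∂(ρ s) :=
      aux_integral_bind (ρ s) (fun a => T s a) (hTa s) 1 one_ne_top
        (fun a => by simp [measure_univ]) hV Mv hMv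
    calc ∫ a, Q s a ∂(ρ s) = ∫ a, (c s a + ∫ x, V x ∂(T s a)) ∂(ρ s) := by
          simp_rw [hQ]
      _ = (∫ a, c s a ∂(ρ s)) + ∫ a, ∫ x, V x ∂(T s a) ∂(ρ s) := integral_add h1 h2
      _ = (∫ a, c s a ∂(ρ s)) + ∫ x, V x ∂((ρ s).bind (T s)) := by rw [h3]
  -- integrabilities over μπ
  have hint_cp : Integrable (fun s => ∫ a, c s a ∂(δp s)) μπ :=
    aux_integrable_param μπ δp hδp Cb coe_ne_top hδpb hc Mc hMc
  have hint_cm : Integrable (fun s => ∫ a, c s a ∂(δm s)) μπ :=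
    aux_integrable_param μπ δm hδm Cb coe_ne_top hδmb hc Mc hMc
  have hint_Vp : Integrable (fun s => ∫ x, V x ∂((δp s).bind (T s))) μπ :=
    aux_integrable_param μπ (fun s => (δp s).bind (T s)) hKpm Cb coe_ne_top hKpb
      (f := fun s x => V x) (hV.comp measurable_snd) Mv (fun s x => hMv x)
  have hint_Vm : Integrable (fun s => ∫ x, V x ∂((δm s).bind (T s))) μπ :=
    aux_integrable_param μπ (fun s => (δm s).bind (T s)) hKmm Cb coe_ne_top hKmb
      (f := fun s x => V x) (hV.comp measurable_snd) Mv (fun s x => hMv x)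
  -- step 2: expand RHS of the goal
  have hRHS : ∫ s, ((∫ a, Q s a ∂(δp s)) - (∫ a, Q s a ∂(δm s))) ∂μπ
      = (∫ s, ((∫ a, c s a ∂(δp s)) - (∫ a, c s a ∂(δm s))) ∂μπ)
        + ((∫ s, (∫ x, V x ∂((δp s).bind (T s))) ∂μπ)
            - ∫ s, (∫ x, V x ∂((δm s).bind (T s))) ∂μπ) := by
    have : ∀ s, (∫ a, Q s a ∂(δp s)) - (∫ a, Q s a ∂(δm s))
        = ((∫ a, c s a ∂(δp s)) - (∫ a, c s a ∂(δm s)))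
          + ((∫ x, V x ∂((δp s).bind (T s))) - ∫ x, V x ∂((δm s).bind (T s))) := by
      intro s
      rw [hQexp δp hδp hδpb s, hQexp δm hδm hδmb s]; ring
    simp_rw [this]
    have h1 : Integrable (fun s => (∫ a, c s a ∂(δp s)) - ∫ a, c s a ∂(δm s)) μπ :=
      hint_cp.sub hint_cm
    have h2 : Integrable
        (fun s => (∫ x, V x ∂((δp s).bind (T s))) - ∫ x, V x ∂((δm s).bind (T s))) μπ :=
      hint_Vp.sub hint_Vm
    rw [integral_add h1 h2, integral_sub hint_Vp hint_Vm]
  -- bind-measure finiteness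
  have hbind_univ : ∀ (m : Measure S) (κ : S → Measure S), Measurable κ →
      (m.bind κ) Set.univ = ∫⁻ s, κ s Set.univ ∂m := fun m κ hκ =>
    Measure.bind_apply MeasurableSet.univ hκ.aemeasurable
  haveI : IsFiniteMeasure (νp.bind fun s => (π s).bind (T s)) := by
    refine ⟨?_⟩
    rw [hbind_univ _ _ hPπm]
    exact lt_of_le_of_lt (by
      calc ∫⁻ s, ((π s).bind (T s)) Set.univ ∂νp ≤ ∫⁻ _, 1 ∂νp :=
            lintegral_mono fun s => hPπb s
        _ = νp Set.univ := by simp) (measure_lt_top νp _)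
  haveI : IsFiniteMeasure (νm.bind fun s => (π s).bind (T s)) := by
    refine ⟨?_⟩
    rw [hbind_univ _ _ hPπm]
    exact lt_of_le_of_lt (by
      calc ∫⁻ s, ((π s).bind (T s)) Set.univ ∂νm ≤ ∫⁻ _, 1 ∂νm :=
            lintegral_mono fun s => hPπb s
        _ = νm Set.univ := by simp) (measure_lt_top νm _)
  haveI : IsFiniteMeasure (μπ.bind fun s => (δp s).bind (T s)) := by
    refine ⟨?_⟩
    rw [hbind_univ _ _ hKpm]
    exact lt_of_le_of_lt (by
      calc ∫⁻ s, ((δp s).bind (T s)) Set.univ ∂μπ ≤ ∫⁻ _, (Cb : ℝ≥0∞) ∂μπ :=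
            lintegral_mono fun s => hKpb s
        _ = Cb := by simp) coe_lt_top
  haveI : IsFiniteMeasure (μπ.bind fun s => (δm s).bind (T s)) := by
    refine ⟨?_⟩
    rw [hbind_univ _ _ hKmm]
    exact lt_of_le_of_lt (by
      calc ∫⁻ s, ((δm s).bind (T s)) Set.univ ∂μπ ≤ ∫⁻ _, (Cb : ℝ≥0∞) ∂μπ :=
            lintegral_mono fun s => hKmb s
        _ = Cb := by simp) coe_lt_top
  -- step 3: exchange over μπ
  have hGp : ∫ s, (∫ x, V x ∂((δp s).bind (T s))) ∂μπ
      = ∫ x, V x ∂(μπ.bind fun s => (δp s).bind (T s)) :=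
    (aux_integral_bind μπ _ hKpm Cb coe_ne_top hKpb hV Mv hMv).symm
  have hGm : ∫ s, (∫ x, V x ∂((δm s).bind (T s))) ∂μπ
      = ∫ x, V x ∂(μπ.bind fun s => (δm s).bind (T s)) :=
    (aux_integral_bind μπ _ hKmm Cb coe_ne_top hKmb hV Mv hMv).symm
  -- step 4: Poisson rewrite of ∫ Cπ dν
  have hintV : ∀ (m : Measure S) [IsFiniteMeasure m], Integrable V m := fun m _ =>
    aux_int_bdd m hV.aestronglyMeasurable Mv hMv
  have hCπ : ∀ (m : Measure S), IsFiniteMeasure m →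
      ∫ s, (∫ a, c s a ∂(π s)) ∂m
        = (∫ s, V s ∂m) - ∫ x, V x ∂(m.bind fun s => (π s).bind (T s)) := by
    intro m hm
    have h2 : Integrable (fun s => ∫ x, V x ∂((π s).bind (T s))) m :=
      aux_integrable_param m (fun s => (π s).bind (T s)) hPπm 1 one_ne_top hPπb
        (f := fun s x => V x) (hV.comp measurable_snd) Mv (fun s x => hMv x)
    have h3 : ∫ x, V x ∂(m.bind fun s => (π s).bind (T s))
        = ∫ s, ∫ x, V x ∂((π s).bind (T s)) ∂m :=
      aux_integral_bind m _ hPπm 1 one_ne_top hPπb hV Mv hMv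
    calc ∫ s, (∫ a, c s a ∂(π s)) ∂m
        = ∫ s, (V s - ∫ x, V x ∂((π s).bind (T s))) ∂m := by simp_rw [hPoisson]
      _ = (∫ s, V s ∂m) - ∫ s, ∫ x, V x ∂((π s).bind (T s)) ∂m :=
          integral_sub (hintV m) h2
      _ = (∫ s, V s ∂m) - ∫ x, V x ∂(m.bind fun s => (π s).bind (T s)) := by rw [h3]
  -- step 5: measure identity from hν
  have hmeq : νp + (νm.bind fun s => (π s).bind (T s)) + (μπ.bind fun s => (δm s).bind (T s))
      = νm + (νp.bind fun s => (π s).bind (T s)) + (μπ.bind fun s => (δp s).bind (T s)) := by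
    ext B hB
    simp only [Measure.add_apply]
    rw [Measure.bind_apply hB hPπm.aemeasurable, Measure.bind_apply hB hPπm.aemeasurable,
      Measure.bind_apply hB hKpm.aemeasurable, Measure.bind_apply hB hKmm.aemeasurable]
    exact hν B hB
  -- step 6: integrate V against the measure identity
  have hVeq : (∫ s, V s ∂νp) + (∫ x, V x ∂(νm.bind fun s => (π s).bind (T s)))
        + (∫ x, V x ∂(μπ.bind fun s => (δm s).bind (T s)))
      = (∫ s, V s ∂νm) + (∫ x, V x ∂(νp.bind fun s => (π s).bind (T s)))
        + (∫ x, V x ∂(μπ.bind fun s => (δp s).bind (T s))) := by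
    have h := congrArg (fun m : Measure S => ∫ x, V x ∂m) hmeq
    beta_reduce at h
    rwa [integral_add_measure (hintV _) (hintV _), integral_add_measure (hintV _) (hintV _),
      integral_add_measure (hintV _) (hintV _), integral_add_measure (hintV _) (hintV _)] at h
  rw [hRHS, hGp, hGm, hCπ νp inferInstance, hCπ νm inferInstance]
  linarith [hVeq]
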